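/- With the setup of the Euclidean discrete conformal deformation of a single triangle, the symmetry ∂θ_i/∂u_j = ∂θ_j/∂u_i holds for all distinct i, j (both equal cot θ_k). -/

import Mathlib

noncomputable def angOpp (a b c : ℝ) : ℝ := Real.arccos ((b ^ 2 + c ^ 2 - a ^ 2) / (2 * b * c))

open Real

lemma cos_bound {a b c : ℝ} (ha : 0 < a) (hb : 0 < b) (hc : 0 < c)
    (h1 : a + b > c) (h2 : b + c > a) (h3 : c + a > b) :
    -1 < (b ^ 2 + c ^ 2 - a ^ 2) / (2 * b * c) ∧ (b ^ 2 + c ^ 2 - a ^ 2) / (2 * b * c) < 1 := by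
  have hbc : (0:ℝ) < 2 * b * c := by positivity
  constructor
  · rw [show (-1:ℝ) = -(2*b*c)/(2*b*c) by field_simp, div_lt_div_iff₀ hbc hbc]
    nlinarith [mul_pos (show 0 < b + c - a by linarith) (show 0 < b + c + a by linarith)]
  · rw [div_lt_one hbc]
    nlinarith [mul_pos (show 0 < a - b + c by linarith) (show 0 < a + b - c by linarith)]

set_option maxHeartbeats 1600000 in
lemma main_deriv (a0 b0 c0 : ℝ) (ha0 : 0 < a0) (hb0 : 0 < b0) (hc0 : 0 < c0)
    (u v w : ℝ) (a b c : ℝ)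
    (ha : a = Real.exp (v + w) * a0) (hb : b = Real.exp (u + w) * b0)
    (hc : c = Real.exp (u + v) * c0)
    (h1 : a + b > c) (h2 : b + c > a) (h3 : c + a > b) :
    HasDerivAt
      (fun t : ℝ => angOpp (Real.exp (t + w) * a0) (Real.exp (u + w) * b0)
        (Real.exp (u + t) * c0))
      (Real.cos (angOpp c a b) / Real.sin (angOpp c a b)) v := by
  have hapos : 0 < a := ha ▸ by positivity
  have hbpos : 0 < b := hb ▸ by positivity
  have hcpos : 0 < c := hc ▸ by positivity
  set x := (b ^ 2 + c ^ 2 - a ^ 2) / (2 * b * c) with hxdef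
  set y := (a ^ 2 + b ^ 2 - c ^ 2) / (2 * a * b) with hydef
  obtain ⟨hx1, hx2⟩ := cos_bound hapos hbpos hcpos h1 h2 h3
  obtain ⟨hy1, hy2⟩ := cos_bound hcpos hapos hbpos (by linarith) (by linarith) (by linarith)
  rw [← hydef] at hy1 hy2
  -- sin and cos of the angles
  have hsx : (0:ℝ) < Real.sqrt (1 - x ^ 2) := Real.sqrt_pos.2 (by nlinarith)
  have hsy : (0:ℝ) < Real.sqrt (1 - y ^ 2) := Real.sqrt_pos.2 (by nlinarith)
  -- law of sines
  have hkey : (1 - x ^ 2) * c ^ 2 = (1 - y ^ 2) * a ^ 2 := by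
    rw [hxdef, hydef]; field_simp; ring
  have hsines : Real.sqrt (1 - x ^ 2) * c = Real.sqrt (1 - y ^ 2) * a := by
    rw [← Real.sqrt_sq hcpos.le, ← Real.sqrt_mul (by nlinarith), hkey,
      Real.sqrt_mul (by nlinarith), Real.sqrt_sq hapos.le]
  -- derivative of the inner function
  have hA : HasDerivAt (fun t : ℝ => Real.exp (t + w) * a0) (Real.exp (v + w) * 1 * a0) v :=
    (((hasDerivAt_id v).add_const w).exp).mul_const a0
  have hC : HasDerivAt (fun t : ℝ => Real.exp (u + t) * c0) (Real.exp (u + v) * 1 * c0) v :=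
    (((hasDerivAt_id v).const_add u).exp).mul_const c0
  have hN : HasDerivAt (fun t : ℝ => b ^ 2 + (Real.exp (u + t) * c0) ^ 2
      - (Real.exp (t + w) * a0) ^ 2)
      ((0 : ℝ) + 2 * (Real.exp (u + v) * c0) ^ 1 * (Real.exp (u + v) * 1 * c0)
        - 2 * (Real.exp (v + w) * a0) ^ 1 * (Real.exp (v + w) * 1 * a0)) v :=
    ((hasDerivAt_const v (b ^ 2)).add (hC.pow 2)).sub (hA.pow 2)
  have hD : HasDerivAt (fun t : ℝ => 2 * b * (Real.exp (u + t) * c0))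
      (2 * b * (Real.exp (u + v) * 1 * c0)) v := hC.const_mul (2 * b)
  have hDne : 2 * b * (Real.exp (u + v) * c0) ≠ 0 := by positivity
  have hg := hN.div hD hDne
  have hg' : HasDerivAt (fun t : ℝ => (b ^ 2 + (Real.exp (u + t) * c0) ^ 2
      - (Real.exp (t + w) * a0) ^ 2) / (2 * b * (Real.exp (u + t) * c0)))
      ((c ^ 2 - a ^ 2) / (b * c) - x) v := by
    refine hg.congr_deriv ?_
    rw [hxdef, ha, hc]
    have e1 := Real.exp_ne_zero (u + v)
    have e2 := Real.exp_ne_zero (v + w)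
    field_simp
    ring
  -- compose with arccos
  have hgv : (b ^ 2 + (Real.exp (u + v) * c0) ^ 2 - (Real.exp (v + w) * a0) ^ 2)
      / (2 * b * (Real.exp (u + v) * c0)) = x := by rw [hxdef, ha, hc]
  have harccos : HasDerivAt Real.arccos (-(1 / Real.sqrt (1 - x ^ 2)))
      ((b ^ 2 + (Real.exp (u + v) * c0) ^ 2 - (Real.exp (v + w) * a0) ^ 2)
        / (2 * b * (Real.exp (u + v) * c0))) := by
    rw [hgv]; exact Real.hasDerivAt_arccos (by linarith) (by linarith)
  have harc := harccos.comp v hg'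
  have hfun : (Real.arccos ∘ fun t : ℝ => (b ^ 2 + (Real.exp (u + t) * c0) ^ 2
        - (Real.exp (t + w) * a0) ^ 2) / (2 * b * (Real.exp (u + t) * c0)))
      = (fun t : ℝ => angOpp (Real.exp (t + w) * a0) (Real.exp (u + w) * b0)
        (Real.exp (u + t) * c0)) := by
    funext t
    simp only [Function.comp, angOpp, ← hb]
  rw [hfun] at harc
  refine harc.congr_deriv (Eq.symm ?_)
  -- value computation
  unfold angOpp
  rw [← hydef, Real.cos_arccos (by linarith) (by linarith), Real.sin_arccos]
  have hG : (c ^ 2 - a ^ 2) / (b * c) - x = -(a * y / c) := by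
    rw [hxdef, hydef]; field_simp; ring
  have hSx : Real.sqrt (1 - x ^ 2) = Real.sqrt (1 - y ^ 2) * a / c := by
    field_simp [hcpos.ne']; exact hsines
  rw [hG, hSx]
  field_simp

lemma angOpp_comm (a b c : ℝ) : angOpp a b c = angOpp a c b := by
  unfold angOpp
  congr 1
  ring

/-- Symmetry `∂θ_i/∂u_j = ∂θ_j/∂u_i` in the Euclidean discrete conformal deformation:
both derivatives equal `cot θ_k`. -/
theorem yamabe_symmetry
    (li0 lj0 lk0 : ℝ) (hli0 : 0 < li0) (hlj0 : 0 < lj0) (hlk0 : 0 < lk0)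
    (ui uj uk : ℝ)
    (li lj lk : ℝ)
    (hli : li = Real.exp (uj + uk) * li0)
    (hlj : lj = Real.exp (ui + uk) * lj0)
    (hlk : lk = Real.exp (ui + uj) * lk0)
    (h1 : li + lj > lk) (h2 : lj + lk > li) (h3 : lk + li > lj) :
    HasDerivAt
      (fun t : ℝ => angOpp (Real.exp (t + uk) * li0) (Real.exp (ui + uk) * lj0)
        (Real.exp (ui + t) * lk0))
      (Real.cos (angOpp lk li lj) / Real.sin (angOpp lk li lj)) uj ∧
    HasDerivAt
      (fun t : ℝ => angOpp (Real.exp (t + uk) * lj0) (Real.exp (uj + uk) * li0)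
        (Real.exp (uj + t) * lk0))
      (Real.cos (angOpp lk li lj) / Real.sin (angOpp lk li lj)) ui := by
  constructor
  · exact main_deriv li0 lj0 lk0 hli0 hlj0 hlk0 ui uj uk li lj lk
      hli (by rw [hlj, add_comm ui uk]) (by rw [hlk, add_comm ui uj])
      (by linarith) (by linarith) (by linarith)
  · have := main_deriv lj0 li0 lk0 hlj0 hli0 hlk0 uj ui uk lj li lk
      (by rw [hlj, add_comm ui uk]) hli (by rw [hlk, add_comm ui uj])
      (by linarith) (by linarith) (by linarith)
    rwa [angOpp_comm lk lj li] at this
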